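/- The first-order quantum Wasserstein distance W_1^d is jointly convex: for states ρ₁, σ₁, ρ₂, σ₂ and r₁, r₂ ≥ 0 with r₁ + r₂ = 1, W_1^d(r₁ρ₁ + r₂ρ₂, r₁σ₁ + r₂σ₂) ≤ r₁ W_1^d(ρ₁,σ₁) + r₂ W_1^d(ρ₂,σ₂). -/

import Mathlib

open scoped BigOperators ComplexOrder
open Matrix

noncomputable section

abbrev QV (D : ℕ) := EuclideanSpace ℂ (Fin D)

def qproj {D : ℕ} (ψ : QV D) : Matrix (Fin D) (Fin D) ℂ :=
  Matrix.of fun i j => ψ i * (starRingEnd ℂ) (ψ j)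

/-- A quantum transport plan between `ρ` and `σ`. -/
structure TPlan (D : ℕ) (ρ σ : Matrix (Fin D) (Fin D) ℂ) where
  n : ℕ
  q : Fin n → ℝ
  ψ : Fin n → QV D
  φ : Fin n → QV D
  q_pos : ∀ j, 0 < q j
  ψ_unit : ∀ j, ‖ψ j‖ = 1
  φ_unit : ∀ j, ‖φ j‖ = 1
  margL : ∑ j, (q j : ℂ) • qproj (ψ j) = ρ
  margR : ∑ j, (q j : ℂ) • qproj (φ j) = σ

/-- p-th order transport cost of a plan (before the 1/p root). -/
def Tcost {D : ℕ} (d : QV D → QV D → ℝ) (p : ℝ) {ρ σ : Matrix (Fin D) (Fin D) ℂ}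
    (Q : TPlan D ρ σ) : ℝ :=
  ∑ j, Q.q j * d (Q.ψ j) (Q.φ j) ^ p

/-- The order-p quantum Wasserstein distance. -/
def Wp {D : ℕ} (d : QV D → QV D → ℝ) (p : ℝ) (ρ σ : Matrix (Fin D) (Fin D) ℂ) : ℝ :=
  sInf { x | ∃ Q : TPlan D ρ σ, x = (Tcost d p Q) ^ (1/p) }

/-- The infinite-order quantum Wasserstein distance. -/
def Winf {D : ℕ} (d : QV D → QV D → ℝ) (ρ σ : Matrix (Fin D) (Fin D) ℂ) : ℝ :=
  sInf { x | ∃ Q : TPlan D ρ σ, x = ⨆ j, d (Q.ψ j) (Q.φ j) }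

def IsDensity {D : ℕ} (ρ : Matrix (Fin D) (Fin D) ℂ) : Prop :=
  ρ.PosSemidef ∧ ρ.trace = 1

/-- Hilbert–Schmidt (Frobenius) norm. -/
def frob {D : ℕ} (A : Matrix (Fin D) (Fin D) ℂ) : ℝ :=
  Real.sqrt (∑ i, ∑ j, ‖A i j‖ ^ 2)

/-- Action of a matrix on a vector of the Euclidean space. -/
def act {D : ℕ} (U : Matrix (Fin D) (Fin D) ℂ) (ψ : QV D) : QV D :=
  (EuclideanSpace.equiv (Fin D) ℂ).symm (U.mulVec (EuclideanSpace.equiv (Fin D) ℂ ψ))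

/-- Dual Lipschitz constant of an observable. -/
def Ld {D : ℕ} (d : QV D → QV D → ℝ) (O : Matrix (Fin D) (Fin D) ℂ) : ℝ :=
  sSup { x | ∃ ρ σ : Matrix (Fin D) (Fin D) ℂ, IsDensity ρ ∧ IsDensity σ ∧ ρ ≠ σ ∧
    x = ((O * (ρ - σ)).trace).re / Wp d 1 ρ σ }

/-- Double-dual norm. -/
def DWnorm {D : ℕ} (d : QV D → QV D → ℝ) (X : Matrix (Fin D) (Fin D) ℂ) : ℝ :=
  sSup { x | ∃ O : Matrix (Fin D) (Fin D) ℂ, O.IsHermitian ∧ O.trace = 0 ∧ Ld d O ≤ 1 ∧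
    x = ((O * X).trace).re }

/-- Trace (nuclear) norm. -/
def traceNorm {D : ℕ} (A : Matrix (Fin D) (Fin D) ℂ) : ℝ :=
  ((Matrix.posSemidef_conjTranspose_mul_self A).1.eigenvectorUnitary.1 *
    diagonal (fun i => ((√((Matrix.posSemidef_conjTranspose_mul_self A).1.eigenvalues i) : ℝ) : ℂ)) *
    (star (Matrix.posSemidef_conjTranspose_mul_self A).1.eigenvectorUnitary :
      Matrix (Fin D) (Fin D) ℂ)).trace.re
-- aux lemmas to test
section Aux

variable {D : ℕ}

lemma qproj_trace {D : ℕ} (ψ : QV D) (hψ : ‖ψ‖ = 1) : (qproj ψ).trace = 1 := by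
  have h2 : ∑ i, Complex.normSq (ψ i) = 1 := by
    have h := hψ
    rw [EuclideanSpace.norm_eq] at h
    have h' : ∑ i, ‖ψ i‖ ^ 2 = 1 := Real.sqrt_eq_one.mp h
    simpa [Complex.normSq_eq_norm_sq] using h'
  calc (qproj ψ).trace = ∑ i, (Complex.normSq (ψ i) : ℂ) := by
        simp [qproj, Matrix.trace, Matrix.diag, Complex.mul_conj]
    _ = 1 := by rw [← Complex.ofReal_sum, h2, Complex.ofReal_one]

lemma density_decomp {ρ : Matrix (Fin D) (Fin D) ℂ} (h : IsDensity ρ) :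
    ∃ (n : ℕ) (q : Fin n → ℝ) (ψ : Fin n → QV D),
      (∀ j, 0 < q j) ∧ (∀ j, ‖ψ j‖ = 1) ∧ (∑ j, (q j : ℂ) • qproj (ψ j)) = ρ ∧
      (∑ j, q j) = 1 := by
  classical
  obtain ⟨hpsd, htr⟩ := h
  have hH : ρ.IsHermitian := hpsd.1
  set lam : Fin D → ℝ := hH.eigenvalues with hlam
  set v : Fin D → QV D := fun i => hH.eigenvectorBasis i with hv
  have hnonneg : ∀ i, 0 ≤ lam i := hpsd.eigenvalues_nonneg
  have hnorm : ∀ i, ‖v i‖ = 1 := fun i => hH.eigenvectorBasis.orthonormal.1 i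
  have hdecomp : ρ = ∑ i, (lam i : ℂ) • qproj (v i) := by
    conv_lhs => rw [hH.spectral_theorem]
    ext a b
    simp only [Matrix.mul_apply, Matrix.diagonal, Matrix.of_apply, Matrix.star_apply,
      Matrix.sum_apply, Matrix.smul_apply, qproj, smul_eq_mul,
      Matrix.IsHermitian.eigenvectorUnitary_apply, Function.comp_apply, Unitary.conjStarAlgAut_apply]
    refine Finset.sum_congr rfl fun x _ => ?_
    simp only [mul_ite, mul_zero, Finset.sum_ite_eq', Finset.mem_univ, if_true]
    simp only [hv, hlam, RCLike.star_def]
    rw [mul_right_comm, mul_comm]; rfl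
  have htrace : (∑ i, lam i) = 1 := by
    have h1 : ρ.trace = ∑ i, (lam i : ℂ) := by
      rw [hdecomp, Matrix.trace_sum]
      refine Finset.sum_congr rfl fun i _ => ?_
      rw [Matrix.trace_smul, qproj_trace (v i) (hnorm i), smul_eq_mul, mul_one]
    rw [htr] at h1
    exact_mod_cast h1.symm
  -- filter out zero eigenvalues
  set s : Finset (Fin D) := Finset.univ.filter (fun i => lam i ≠ 0) with hs
  have key : ∀ {M : Type} [AddCommMonoid M] (f : Fin D → M),
      (∀ i, lam i = 0 → f i = 0) → ∑ j, f ((s.equivFin.symm j) : Fin D) = ∑ i, f i := by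
    intro M _ f hz
    rw [Equiv.sum_comp s.equivFin.symm (fun i : s => f i), Finset.sum_coe_sort s f]
    refine Finset.sum_subset (Finset.subset_univ s) fun i _ hi => ?_
    refine hz i ?_
    by_contra hne
    exact hi (Finset.mem_filter.mpr ⟨Finset.mem_univ i, hne⟩)
  refine ⟨s.card, fun j => lam (s.equivFin.symm j), fun j => v (s.equivFin.symm j),
    ?_, fun j => hnorm _, ?_, ?_⟩
  · intro j
    have hmem := (s.equivFin.symm j).2
    have hne : lam ((s.equivFin.symm j) : Fin D) ≠ 0 := (Finset.mem_filter.mp hmem).2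
    exact lt_of_le_of_ne (hnonneg _) (Ne.symm hne)
  · rw [key (fun i => (lam i : ℂ) • qproj (v i)) (fun i hi => by simp [hi])]
    exact hdecomp.symm
  · rw [key lam (fun i hi => hi)]
    exact htrace

end Aux

section Aux2
variable {D : ℕ}

lemma exists_plan {ρ σ : Matrix (Fin D) (Fin D) ℂ} (hρ : IsDensity ρ) (hσ : IsDensity σ) :
    Nonempty (TPlan D ρ σ) := by
  obtain ⟨n₁, q₁, ψ₁, hq₁, hψ₁, hm₁, hs₁⟩ := density_decomp hρ
  obtain ⟨n₂, q₂, ψ₂, hq₂, hψ₂, hm₂, hs₂⟩ := density_decomp hσ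
  refine ⟨{
    n := n₁ * n₂
    q := fun j => q₁ (finProdFinEquiv.symm j).1 * q₂ (finProdFinEquiv.symm j).2
    ψ := fun j => ψ₁ (finProdFinEquiv.symm j).1
    φ := fun j => ψ₂ (finProdFinEquiv.symm j).2
    q_pos := fun j => mul_pos (hq₁ _) (hq₂ _)
    ψ_unit := fun j => hψ₁ _
    φ_unit := fun j => hψ₂ _
    margL := ?_
    margR := ?_ }⟩
  · rw [← Equiv.sum_comp finProdFinEquiv
      (fun j => ((q₁ (finProdFinEquiv.symm j).1 * q₂ (finProdFinEquiv.symm j).2 : ℝ) : ℂ) •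
        qproj (ψ₁ (finProdFinEquiv.symm j).1))]
    simp only [Equiv.symm_apply_apply]
    rw [← hm₁, Fintype.sum_prod_type]
    rw [Finset.sum_comm]
    rw [show ∑ y : Fin n₂, ∑ x : Fin n₁, ((q₁ x * q₂ y : ℝ) : ℂ) • qproj (ψ₁ x)
        = ∑ y : Fin n₂, (q₂ y : ℝ) • ∑ x : Fin n₁, ((q₁ x : ℝ) : ℂ) • qproj (ψ₁ x) from ?_]
    · rw [← Finset.sum_smul]  -- (∑ q₂ y) • M
      rw [hs₂, one_smul]
    · refine Finset.sum_congr rfl fun y _ => ?_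
      rw [Finset.smul_sum]
      refine Finset.sum_congr rfl fun x _ => ?_
      match_scalars
      simp only [Complex.coe_algebraMap]
      ring
  · rw [← Equiv.sum_comp finProdFinEquiv
      (fun j => ((q₁ (finProdFinEquiv.symm j).1 * q₂ (finProdFinEquiv.symm j).2 : ℝ) : ℂ) •
        qproj (ψ₂ (finProdFinEquiv.symm j).2))]
    simp only [Equiv.symm_apply_apply]
    rw [← hm₂, Fintype.sum_prod_type]
    rw [show ∑ x : Fin n₁, ∑ y : Fin n₂, ((q₁ x * q₂ y : ℝ) : ℂ) • qproj (ψ₂ y)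
        = ∑ x : Fin n₁, (q₁ x : ℝ) • ∑ y : Fin n₂, ((q₂ y : ℝ) : ℂ) • qproj (ψ₂ y) from ?_]
    · rw [← Finset.sum_smul, hs₁, one_smul]
    · refine Finset.sum_congr rfl fun x _ => ?_
      rw [Finset.smul_sum]
      refine Finset.sum_congr rfl fun y _ => ?_
      match_scalars
      simp only [Complex.coe_algebraMap]
      ring

end Aux2

section Aux3
variable {D : ℕ}

lemma tcost_nonneg (d : QV D → QV D → ℝ) (hdnn : ∀ a b : QV D, 0 ≤ d a b) (p : ℝ)
    {ρ σ : Matrix (Fin D) (Fin D) ℂ} (Q : TPlan D ρ σ) : 0 ≤ Tcost d p Q :=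
  Finset.sum_nonneg fun j _ => mul_nonneg (Q.q_pos j).le (Real.rpow_nonneg (hdnn _ _) p)

lemma smul_plan_sum {n : ℕ} (q : Fin n → ℝ) (ψ : Fin n → QV D) (r : ℝ) :
    ∑ i, (((r * q i : ℝ)) : ℂ) • qproj (ψ i) = (r : ℂ) • ∑ i, ((q i : ℝ) : ℂ) • qproj (ψ i) := by
  rw [Finset.smul_sum]
  refine Finset.sum_congr rfl fun i _ => ?_
  push_cast
  rw [mul_smul]

lemma combine_plan (d : QV D → QV D → ℝ) (p : ℝ) {ρ₁ σ₁ ρ₂ σ₂ : Matrix (Fin D) (Fin D) ℂ}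
    (Q₁ : TPlan D ρ₁ σ₁) (Q₂ : TPlan D ρ₂ σ₂) {r₁ r₂ : ℝ} (h₁ : 0 < r₁) (h₂ : 0 < r₂) :
    ∃ Q : TPlan D ((r₁ : ℂ) • ρ₁ + (r₂ : ℂ) • ρ₂) ((r₁ : ℂ) • σ₁ + (r₂ : ℂ) • σ₂),
      Tcost d p Q = r₁ * Tcost d p Q₁ + r₂ * Tcost d p Q₂ := by
  set qq : Fin (Q₁.n + Q₂.n) → ℝ :=
    Fin.addCases (fun i => r₁ * Q₁.q i) (fun i => r₂ * Q₂.q i) with hqq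
  set pp : Fin (Q₁.n + Q₂.n) → QV D := Fin.addCases Q₁.ψ Q₂.ψ with hpp
  set ff : Fin (Q₁.n + Q₂.n) → QV D := Fin.addCases Q₁.φ Q₂.φ with hff
  have hql : ∀ i, qq (Fin.castAdd Q₂.n i) = r₁ * Q₁.q i := fun i => by
    simp only [hqq, Fin.addCases_left]
  have hqr : ∀ i, qq (Fin.natAdd Q₁.n i) = r₂ * Q₂.q i := fun i => by
    simp only [hqq, Fin.addCases_right]
  have hpl : ∀ i, pp (Fin.castAdd Q₂.n i) = Q₁.ψ i := fun i => by
    simp only [hpp, Fin.addCases_left]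
  have hpr : ∀ i, pp (Fin.natAdd Q₁.n i) = Q₂.ψ i := fun i => by
    simp only [hpp, Fin.addCases_right]
  have hfl : ∀ i, ff (Fin.castAdd Q₂.n i) = Q₁.φ i := fun i => by
    simp only [hff, Fin.addCases_left]
  have hfr : ∀ i, ff (Fin.natAdd Q₁.n i) = Q₂.φ i := fun i => by
    simp only [hff, Fin.addCases_right]
  have hcases : ∀ (P : Fin (Q₁.n + Q₂.n) → Prop),
      (∀ i, P (Fin.castAdd Q₂.n i)) → (∀ i, P (Fin.natAdd Q₁.n i)) → ∀ j, P j :=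
    fun P hl hr j => Fin.addCases hl hr j
  refine ⟨{
    n := Q₁.n + Q₂.n
    q := qq
    ψ := pp
    φ := ff
    q_pos := hcases _ (fun i => by rw [hql]; exact mul_pos h₁ (Q₁.q_pos i))
      (fun i => by rw [hqr]; exact mul_pos h₂ (Q₂.q_pos i))
    ψ_unit := hcases _ (fun i => by rw [hpl]; exact Q₁.ψ_unit i)
      (fun i => by rw [hpr]; exact Q₂.ψ_unit i)
    φ_unit := hcases _ (fun i => by rw [hfl]; exact Q₁.φ_unit i)
      (fun i => by rw [hfr]; exact Q₂.φ_unit i)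
    margL := by
      rw [Fin.sum_univ_add]
      simp only [hql, hqr, hpl, hpr]
      rw [smul_plan_sum, smul_plan_sum, Q₁.margL, Q₂.margL]
    margR := by
      rw [Fin.sum_univ_add]
      simp only [hql, hqr, hfl, hfr]
      rw [smul_plan_sum, smul_plan_sum, Q₁.margR, Q₂.margR] }, ?_⟩
  show (∑ j : Fin (Q₁.n + Q₂.n), qq j * d (pp j) (ff j) ^ p) = _
  rw [Fin.sum_univ_add]
  simp only [hql, hqr, hpl, hpr, hfl, hfr]
  unfold Tcost
  rw [Finset.mul_sum, Finset.mul_sum]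
  congr 1 <;> exact Finset.sum_congr rfl fun i _ => (mul_assoc _ _ _)

end Aux3

/-- `W_1^d` is jointly convex. -/
theorem wasserstein_one_jointly_convex {D : ℕ} (d : QV D → QV D → ℝ)
    (hdnn : ∀ a b : QV D, 0 ≤ d a b)
    (ρ₁ σ₁ ρ₂ σ₂ : Matrix (Fin D) (Fin D) ℂ)
    (h1 : IsDensity ρ₁) (h2 : IsDensity σ₁) (h3 : IsDensity ρ₂) (h4 : IsDensity σ₂)
    (r₁ r₂ : ℝ) (hr₁ : 0 ≤ r₁) (hr₂ : 0 ≤ r₂) (hr : r₁ + r₂ = 1) :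
    Wp d 1 ((r₁ : ℂ) • ρ₁ + (r₂ : ℂ) • ρ₂) ((r₁ : ℂ) • σ₁ + (r₂ : ℂ) • σ₂) ≤
      r₁ * Wp d 1 ρ₁ σ₁ + r₂ * Wp d 1 ρ₂ σ₂ := by
  rcases hr₁.eq_or_lt with h|h₁pos
  · have hr2 : r₂ = 1 := by linarith
    subst hr2
    rw [← h]
    simp
  · rcases hr₂.eq_or_lt with h2|h₂pos
    · have hr1 : r₁ = 1 := by linarith
      subst hr1
      rw [← h2]
      simp
    · obtain ⟨Qex₁⟩ := exists_plan h1 h2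
      obtain ⟨Qex₂⟩ := exists_plan h3 h4
      have hone : (1:ℝ)/1 = 1 := by norm_num
      have hbdd : BddBelow {x | ∃ Q : TPlan D ((r₁ : ℂ) • ρ₁ + (r₂ : ℂ) • ρ₂)
          ((r₁ : ℂ) • σ₁ + (r₂ : ℂ) • σ₂), x = Tcost d 1 Q ^ ((1:ℝ)/1)} := by
        refine ⟨0, ?_⟩
        rintro x ⟨Q, rfl⟩
        exact Real.rpow_nonneg (tcost_nonneg d hdnn 1 Q) _
      have key : ∀ (Qa : TPlan D ρ₁ σ₁) (Qb : TPlan D ρ₂ σ₂),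
          Wp d 1 ((r₁ : ℂ) • ρ₁ + (r₂ : ℂ) • ρ₂) ((r₁ : ℂ) • σ₁ + (r₂ : ℂ) • σ₂) ≤
            r₁ * (Tcost d 1 Qa ^ ((1:ℝ)/1)) + r₂ * (Tcost d 1 Qb ^ ((1:ℝ)/1)) := by
        intro Qa Qb
        obtain ⟨Q, hQ⟩ := combine_plan d 1 Qa Qb h₁pos h₂pos
        calc Wp d 1 ((r₁ : ℂ) • ρ₁ + (r₂ : ℂ) • ρ₂) ((r₁ : ℂ) • σ₁ + (r₂ : ℂ) • σ₂)
            ≤ Tcost d 1 Q ^ ((1:ℝ)/1) := csInf_le hbdd ⟨Q, rfl⟩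
          _ = r₁ * (Tcost d 1 Qa ^ ((1:ℝ)/1)) + r₂ * (Tcost d 1 Qb ^ ((1:ℝ)/1)) := by
              rw [hone, Real.rpow_one, Real.rpow_one, Real.rpow_one, hQ]
      refine le_of_forall_pos_le_add fun ε hε => ?_
      have hne₁ : {x | ∃ Q : TPlan D ρ₁ σ₁, x = Tcost d 1 Q ^ ((1:ℝ)/1)}.Nonempty :=
        ⟨_, ⟨Qex₁, rfl⟩⟩
      have hne₂ : {x | ∃ Q : TPlan D ρ₂ σ₂, x = Tcost d 1 Q ^ ((1:ℝ)/1)}.Nonempty :=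
        ⟨_, ⟨Qex₂, rfl⟩⟩
      obtain ⟨a, haS, halt⟩ := Real.lt_sInf_add_pos hne₁ hε
      obtain ⟨b, hbS, hblt⟩ := Real.lt_sInf_add_pos hne₂ hε
      obtain ⟨Qa, rfl⟩ := haS
      obtain ⟨Qb, rfl⟩ := hbS
      have hk := key Qa Qb
      have hW1 : Wp d 1 ρ₁ σ₁ = sInf {x | ∃ Q : TPlan D ρ₁ σ₁, x = Tcost d 1 Q ^ ((1:ℝ)/1)} := rfl
      have hW2 : Wp d 1 ρ₂ σ₂ = sInf {x | ∃ Q : TPlan D ρ₂ σ₂, x = Tcost d 1 Q ^ ((1:ℝ)/1)} := rfl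
      rw [hW1, hW2]
      nlinarith [mul_lt_mul_of_pos_left halt h₁pos, mul_lt_mul_of_pos_left hblt h₂pos]
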